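/- Let f : [a, b] → ℝ be twice differentiable with 0 < Λ ≤ f''(x) ≤ cΛ for all x ∈ [a, b], where b ≥ a + 1 and c > 1. Then |∑_{a < n ≤ b} e^{2πi f(n)}| ≤ C (c (b − a) Λ^{1/2} + Λ^{−1/2}) for an absolute constant C. -/

import Mathlib

open Complex
open Finset

noncomputable def ee (t : ℝ) : ℂ := Complex.exp (2 * Real.pi * I * t)

lemma norm_ee (t : ℝ) : ‖ee t‖ = 1 := by
  rw [ee, show (2 * ↑Real.pi * I * ↑t : ℂ) = ↑(2 * Real.pi * t) * I by push_cast; ring,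
    Complex.norm_exp_ofReal_mul_I]

lemma ee_sub_int (t : ℝ) (m : ℤ) : ee (t - m) = ee t := by
  rw [ee, ee, show (2 * ↑Real.pi * I * ↑(t - (m:ℝ)) : ℂ)
      = 2 * ↑Real.pi * I * ↑t + (-m) * (2 * ↑Real.pi * I) by push_cast; ring,
    Complex.exp_add]
  have h := Complex.exp_int_mul_two_pi_mul_I (-m)
  push_cast at h
  rw [h, mul_one]

lemma trivial_bound (A B : ℤ) (g : ℤ → ℝ) :
    ‖∑ n ∈ Finset.Ioc A B, ee (g n)‖ ≤ ((B - A).toNat : ℝ) := by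
  calc ‖∑ n ∈ Finset.Ioc A B, ee (g n)‖ ≤ ∑ n ∈ Finset.Ioc A B, ‖ee (g n)‖ :=
        norm_sum_le _ _
    _ = ∑ n ∈ Finset.Ioc A B, (1:ℝ) := Finset.sum_congr rfl (fun n _ => norm_ee _)
    _ = (Finset.Ioc A B).card := by simp
    _ = ((B - A).toNat : ℝ) := by rw [Int.card_Ioc]

lemma sum_Ico_top {M : Type*} [AddCommMonoid M] {A B : ℤ} (h : A ≤ B) (f : ℤ → M) :
    ∑ n ∈ Finset.Ico A (B + 1), f n = (∑ n ∈ Finset.Ico A B, f n) + f B := by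
  have e : Finset.Ico A (B + 1) = insert B (Finset.Ico A B) := by
    ext n; simp; omega
  rw [e, Finset.sum_insert (by simp), add_comm]

lemma sum_Ioc_top {M : Type*} [AddCommMonoid M] {A B : ℤ} (h : A ≤ B) (f : ℤ → M) :
    ∑ n ∈ Finset.Ioc A (B + 1), f n = (∑ n ∈ Finset.Ioc A B, f n) + f (B + 1) := by
  have e : Finset.Ioc A (B + 1) = insert (B + 1) (Finset.Ioc A B) := by
    ext n; simp; omega
  rw [e, Finset.sum_insert (by simp), add_comm]

lemma sum_Ioc_split {M : Type*} [AddCommMonoid M] {A B C : ℤ} (h1 : A ≤ B) (h2 : B ≤ C)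
    (f : ℤ → M) :
    ∑ n ∈ Finset.Ioc A C, f n = (∑ n ∈ Finset.Ioc A B, f n) + ∑ n ∈ Finset.Ioc B C, f n := by
  rw [← Finset.sum_union (by rw [Finset.disjoint_left]; intro n hn hn'; simp at hn hn'; omega),
    Finset.Ioc_union_Ioc_eq_Ioc h1 h2]

lemma telescope (c : ℤ → ℝ) (A B : ℤ) (h : A ≤ B) :
    ∑ n ∈ Finset.Ico A B, (c n - c (n + 1)) = c A - c B := by
  refine Int.le_induction (motive := fun B _ => ∑ n ∈ Finset.Ico A B, (c n - c (n + 1)) = c A - c B)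
    ?_ ?_ B h
  · simp
  · intro B hB ih
    rw [sum_Ico_top hB, ih]; ring

lemma abel (g v : ℤ → ℂ) (A B : ℤ) (h : A + 1 ≤ B) :
    ∑ n ∈ Finset.Ico A B, (g (n + 1) - g n) * v n
      = g B * v (B - 1) - g A * v A
        + ∑ n ∈ Finset.Ico A (B - 1), g (n + 1) * (v n - v (n + 1)) := by
  refine Int.le_induction (motive := fun B _ => ∑ n ∈ Finset.Ico A B, (g (n + 1) - g n) * v n
      = g B * v (B - 1) - g A * v A
        + ∑ n ∈ Finset.Ico A (B - 1), g (n + 1) * (v n - v (n + 1))) ?_ ?_ B h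
  · rw [sum_Ico_top (le_refl A), show A + 1 - 1 = A by ring]
    simp
    ring
  · intro B hB ih
    have e := sum_Ico_top (by omega : A ≤ B - 1)
      (fun n => g (n + 1) * (v n - v (n + 1)))
    rw [show B - 1 + 1 = B by ring] at e
    rw [sum_Ico_top (by omega : A ≤ B), ih,
      show B + 1 - 1 = B by ring, e]
    ring

open Real in
lemma cot_anti {s t : ℝ} (hs : 0 < s) (hst : s ≤ t) (ht : t < π) :
    Real.cos t / Real.sin t ≤ Real.cos s / Real.sin s := by
  have hsin_s : 0 < Real.sin s := Real.sin_pos_of_pos_of_lt_pi hs (lt_of_le_of_lt hst ht)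
  have hsin_t : 0 < Real.sin t := Real.sin_pos_of_pos_of_lt_pi (lt_of_lt_of_le hs hst) ht
  rw [div_le_div_iff₀ hsin_t hsin_s]
  have h1 : 0 ≤ Real.sin (t - s) :=
    Real.sin_nonneg_of_nonneg_of_le_pi (by linarith) (by nlinarith [Real.pi_pos])
  rw [Real.sin_sub] at h1
  nlinarith

open Real in
lemma sin_ge {δ φ : ℝ} (hδ : 0 < δ) (hδ4 : δ ≤ 1/4) (h1 : δ ≤ φ) (h2 : φ ≤ 1 - δ) :
    2 * δ ≤ Real.sin (π * φ) := by
  have hpi1 := Real.pi_gt_d6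
  have hpi2 := Real.pi_lt_d2
  have key : ∀ ψ : ℝ, δ ≤ ψ → ψ ≤ 1/2 → 2 * δ ≤ Real.sin (π * ψ) := by
    intro ψ k1 k2
    have hmono : Real.sin (π * δ) ≤ Real.sin (π * ψ) := by
      refine Real.strictMonoOn_sin.monotoneOn ⟨by nlinarith, by nlinarith⟩
        ⟨by nlinarith, by nlinarith⟩ (by nlinarith)
    have hcube : π * δ - (π * δ) ^ 3 / 4 < Real.sin (π * δ) :=
      by have := Real.sin_gt_sub_cube (x := π * δ) (by nlinarith)
         nlinarith [pow_pos (mul_pos Real.pi_pos hδ) 3]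
    have hd2 : δ * δ ≤ (1/4) * (1/4) :=
      mul_le_mul hδ4 hδ4 (le_of_lt hδ) (by norm_num)
    have hp3 : (π * δ) ^ 3 ≤ 31.3 * (δ * (1/16)) := by
      have : (π * δ) ^ 3 = (π*π*π) * (δ * (δ*δ)) := by ring
      rw [this]
      have h1' : π*π*π ≤ 31.3 := by nlinarith
      have h2' : δ * (δ*δ) ≤ δ * (1/16) := by nlinarith
      nlinarith [mul_pos (mul_pos hδ hδ) hδ]
    nlinarith
  rcases le_or_gt φ (1/2) with h | h
  · exact key φ h1 h
  · have : Real.sin (π * φ) = Real.sin (π * (1 - φ)) := by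
      rw [show π * (1 - φ) = π - π * φ by ring, Real.sin_pi_sub]
    rw [this]
    exact key (1 - φ) (by linarith) (by linarith)

lemma ee_add (s t : ℝ) : ee (s + t) = ee s * ee t := by
  rw [ee, ee, ee, ← Complex.exp_add]
  congr 1
  push_cast
  ring

open Real in
lemma ee_eq (φ : ℝ) :
    ee φ = ((1 - 2 * Real.sin (π * φ) ^ 2 : ℝ) : ℂ)
      + ((2 * Real.sin (π * φ) * Real.cos (π * φ) : ℝ) : ℂ) * I := by
  have hsc := Real.sin_sq_add_cos_sq (π * φ)
  rw [ee, show (2 * ↑Real.pi * I * ↑φ : ℂ) = ↑(2 * (π * φ)) * I by push_cast; ring,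
    Complex.exp_mul_I, ← Complex.ofReal_cos, ← Complex.ofReal_sin,
    Real.cos_two_mul, Real.sin_two_mul]
  have h : 2 * Real.cos (π * φ) ^ 2 - 1 = 1 - 2 * Real.sin (π * φ) ^ 2 := by nlinarith
  rw [h]

open Real in
lemma ee_sub_one_inv {φ : ℝ} (h1 : 0 < φ) (h2 : φ < 1) :
    (ee φ - 1)⁻¹ = ((-(1/2) : ℝ) : ℂ)
      + ((-(Real.cos (π * φ) / Real.sin (π * φ) / 2) : ℝ) : ℂ) * I := by
  have hs : 0 < Real.sin (π * φ) :=
    Real.sin_pos_of_pos_of_lt_pi (by positivity) (by nlinarith [Real.pi_pos])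
  have hsc := Real.sin_sq_add_cos_sq (π * φ)
  refine inv_eq_of_mul_eq_one_right ?_
  rw [ee_eq]
  set s := Real.sin (π * φ) with hs_def
  set c := Real.cos (π * φ) with hc_def
  have hs' : s ≠ 0 := ne_of_gt hs
  rw [Complex.ext_iff]
  constructor <;>
    simp only [Complex.add_re, Complex.add_im, Complex.mul_re, Complex.mul_im,
      Complex.sub_re, Complex.sub_im, Complex.I_re, Complex.I_im, Complex.ofReal_re,
      Complex.ofReal_im, Complex.one_re, Complex.one_im] <;>
    norm_num <;> field_simp <;> nlinarith

open Real in
lemma ee_ne_one {φ : ℝ} (h1 : 0 < φ) (h2 : φ < 1) : ee φ ≠ 1 := by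
  have hs : 0 < Real.sin (π * φ) :=
    Real.sin_pos_of_pos_of_lt_pi (by positivity) (by nlinarith [Real.pi_pos])
  intro h
  have h' := congrArg Complex.re h
  rw [ee_eq] at h'
  simp only [Complex.add_re, Complex.mul_re, Complex.ofReal_re, Complex.ofReal_im,
    Complex.I_re, Complex.I_im, Complex.one_re] at h'
  nlinarith

open Real in
lemma KL (A B : ℤ) (u : ℤ → ℝ) (δ : ℝ) (hδ : 0 < δ) (hδ4 : δ ≤ 1/4)
    (hlow : ∀ n : ℤ, A + 1 ≤ n → n + 1 ≤ B → δ ≤ u (n+1) - u n)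
    (hhigh : ∀ n : ℤ, A + 1 ≤ n → n + 1 ≤ B → u (n+1) - u n ≤ 1 - δ)
    (hmono : ∀ m n : ℤ, A + 1 ≤ m → m ≤ n → n + 1 ≤ B → u (m+1) - u m ≤ u (n+1) - u n) :
    ‖∑ n ∈ Finset.Ioc A B, ee (u n)‖ ≤ 3 / δ := by
  have hd4 : 4 ≤ 1/δ := by rw [le_div_iff₀ hδ]; linarith
  by_cases hB : B ≤ A + 1
  · calc ‖∑ n ∈ Finset.Ioc A B, ee (u n)‖ ≤ ((B - A).toNat : ℝ) := trivial_bound A B u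
      _ ≤ 1 := by
          have : (B - A).toNat ≤ 1 := by omega
          exact_mod_cast this
      _ ≤ 3/δ := by
          have : 3/δ = 3*(1/δ) := by ring
          linarith
  push_neg at hB
  have hAB : A + 2 ≤ B := by omega
  set φ : ℤ → ℝ := fun n => u (n+1) - u n with hφ_def
  set K : ℤ → ℝ := fun n => Real.cos (π * φ n) / Real.sin (π * φ n) with hK_def
  set v : ℤ → ℂ := fun n => ((-(1/2) : ℝ) : ℂ) + ((-(K n / 2) : ℝ) : ℂ) * I with hv_def
  set g : ℤ → ℂ := fun n => ee (u n) with hg_def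
  have hgnorm : ∀ n : ℤ, ‖g n‖ = 1 := fun n => norm_ee _
  have hφpos : ∀ n : ℤ, A + 1 ≤ n → n + 1 ≤ B → 0 < φ n ∧ φ n < 1 := by
    intro n h1 h2
    have e1 := hlow n h1 h2
    have e2 := hhigh n h1 h2
    constructor <;> simp only [hφ_def] <;> [linarith; linarith]
  have hv : ∀ n : ℤ, A + 1 ≤ n → n + 1 ≤ B → (ee (φ n) - 1)⁻¹ = v n := by
    intro n h1 h2
    obtain ⟨p1, p2⟩ := hφpos n h1 h2
    rw [ee_sub_one_inv p1 p2]
  have hgv : ∀ n : ℤ, A + 1 ≤ n → n + 1 ≤ B → g n = (g (n+1) - g n) * v n := by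
    intro n h1 h2
    obtain ⟨p1, p2⟩ := hφpos n h1 h2
    have hne : ee (φ n) - 1 ≠ 0 := sub_ne_zero.mpr (ee_ne_one p1 p2)
    have hgsucc : g (n+1) = g n * ee (φ n) := by
      show ee (u (n+1)) = ee (u n) * ee (φ n)
      rw [← ee_add]
      congr 1
      simp only [hφ_def]
      ring
    rw [hgsucc, ← hv n h1 h2]
    field_simp
  have hKb : ∀ n : ℤ, A + 1 ≤ n → n + 1 ≤ B → |K n| ≤ 1/(2*δ) := by
    intro n h1 h2
    obtain ⟨p1, p2⟩ := hφpos n h1 h2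
    have hsin : 2*δ ≤ Real.sin (π * φ n) := sin_ge hδ hδ4 (hlow n h1 h2) (hhigh n h1 h2)
    have hsinpos : 0 < Real.sin (π * φ n) := by linarith
    rw [hK_def]
    rw [abs_div, abs_of_pos hsinpos]
    exact div_le_div₀ (by norm_num) (Real.abs_cos_le_one _) (by linarith) hsin
  have hvnorm : ∀ n : ℤ, A + 1 ≤ n → n + 1 ≤ B → ‖v n‖ ≤ 1/2 + 1/(4*δ) := by
    intro n h1 h2
    calc ‖v n‖ ≤ ‖((-(1/2) : ℝ) : ℂ)‖ + ‖((-(K n / 2) : ℝ) : ℂ) * I‖ := norm_add_le _ _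
      _ = 1/2 + |K n|/2 := by
          rw [norm_mul, Complex.norm_real, Complex.norm_real, Complex.norm_I, mul_one,
            Real.norm_eq_abs, Real.norm_eq_abs, abs_neg, abs_neg]
          norm_num [abs_div]
      _ ≤ 1/2 + (1/(2*δ))/2 := by
          have := hKb n h1 h2
          linarith
      _ = 1/2 + 1/(4*δ) := by ring
  have hvdiff : ∀ n : ℤ, A + 1 ≤ n → n + 2 ≤ B → ‖v n - v (n+1)‖ = K n / 2 - K (n+1) / 2 := by
    intro n h1 h2
    have hKmono : K (n+1) ≤ K n := by
      obtain ⟨p1, p2⟩ := hφpos n h1 (by omega)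
      obtain ⟨q1, q2⟩ := hφpos (n+1) (by omega) (by omega)
      refine cot_anti (by positivity) ?_ ?_
      · exact mul_le_mul_of_nonneg_left (hmono n (n+1) h1 (by omega) (by omega))
          (le_of_lt Real.pi_pos)
      · nlinarith [Real.pi_pos]
    have he : v n - v (n+1) = ((K (n+1) / 2 - K n / 2 : ℝ) : ℂ) * I := by
      rw [hv_def]
      push_cast
      ring
    rw [he, norm_mul, Complex.norm_real, Complex.norm_I, mul_one, Real.norm_eq_abs,
      abs_of_nonpos (by linarith)]
    ring
  have hsplit : ∑ n ∈ Finset.Ioc A B, g n = (∑ n ∈ Finset.Ioc A (B-1), g n) + g B := by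
    have h := sum_Ioc_top (by omega : A ≤ B - 1) g
    rw [show B - 1 + 1 = B by ring] at h
    exact h
  have hIoc : Finset.Ioc A (B-1) = Finset.Ico (A+1) B := by ext n; simp
  have e1 : ∑ n ∈ Finset.Ico (A+1) B, g n
      = ∑ n ∈ Finset.Ico (A+1) B, (g (n+1) - g n) * v n := by
    refine Finset.sum_congr rfl (fun n hn => ?_)
    rw [Finset.mem_Ico] at hn
    exact hgv n hn.1 (by omega)
  have e2 := abel g v (A+1) B (by omega)
  have bd1 : ‖g B * v (B-1)‖ ≤ 1/2 + 1/(4*δ) := by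
    rw [norm_mul, hgnorm, one_mul]
    exact hvnorm (B-1) (by omega) (by omega)
  have bd2 : ‖g (A+1) * v (A+1)‖ ≤ 1/2 + 1/(4*δ) := by
    rw [norm_mul, hgnorm, one_mul]
    exact hvnorm (A+1) (by omega) (by omega)
  have bd3 : ‖∑ n ∈ Finset.Ico (A+1) (B-1), g (n+1) * (v n - v (n+1))‖ ≤ 1/(2*δ) := by
    calc ‖∑ n ∈ Finset.Ico (A+1) (B-1), g (n+1) * (v n - v (n+1))‖
        ≤ ∑ n ∈ Finset.Ico (A+1) (B-1), ‖g (n+1) * (v n - v (n+1))‖ := norm_sum_le _ _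
      _ = ∑ n ∈ Finset.Ico (A+1) (B-1), ((fun k => K k / 2) n - (fun k => K k / 2) (n+1)) := by
          refine Finset.sum_congr rfl (fun n hn => ?_)
          rw [Finset.mem_Ico] at hn
          rw [norm_mul, hgnorm, one_mul]
          exact hvdiff n hn.1 (by omega)
      _ = K (A+1) / 2 - K (B-1) / 2 := telescope (fun k => K k / 2) (A+1) (B-1) (by omega)
      _ ≤ |K (A+1)| / 2 + |K (B-1)| / 2 := by
          have := abs_le.mp (le_refl |K (A+1)|)
          have h1 := le_abs_self (K (A+1))
          have h2 := neg_abs_le (K (B-1))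
          linarith
      _ ≤ (1/(2*δ))/2 + (1/(2*δ))/2 := by
          have := hKb (A+1) (by omega) (by omega)
          have := hKb (B-1) (by omega) (by omega)
          linarith
      _ = 1/(2*δ) := by ring
  calc ‖∑ n ∈ Finset.Ioc A B, ee (u n)‖
      = ‖(∑ n ∈ Finset.Ico (A+1) B, (g (n+1) - g n) * v n) + g B‖ := by
        rw [show (∑ n ∈ Finset.Ioc A B, ee (u n)) = ∑ n ∈ Finset.Ioc A B, g n from rfl,
          hsplit, hIoc, e1]
    _ ≤ ‖∑ n ∈ Finset.Ico (A+1) B, (g (n+1) - g n) * v n‖ + ‖g B‖ := norm_add_le _ _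
    _ ≤ (‖g B * v (B-1)‖ + ‖g (A+1) * v (A+1)‖
          + ‖∑ n ∈ Finset.Ico (A+1) (B-1), g (n+1) * (v n - v (n+1))‖) + 1 := by
        rw [e2, hgnorm]
        have h := norm_add_le (g B * v (B-1) - g (A+1) * v (A+1))
          (∑ n ∈ Finset.Ico (A+1) (B-1), g (n+1) * (v n - v (n+1)))
        have h' := norm_sub_le (g B * v (B-1)) (g (A+1) * v (A+1))
        linarith
    _ ≤ ((1/2 + 1/(4*δ)) + (1/2 + 1/(4*δ)) + 1/(2*δ)) + 1 := by linarith
    _ ≤ 3/δ := by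
        have h1 : 1/(4*δ) = (1/δ)/4 := by ring
        have h2 : 1/(2*δ) = (1/δ)/2 := by ring
        have h3 : 3/δ = 3*(1/δ) := by ring
        linarith

section Main

variable {a b c Λ : ℝ} {f : ℝ → ℝ}

lemma cont_f' (hdiff : ∀ x ∈ Set.Icc a b, DifferentiableAt ℝ f x ∧ DifferentiableAt ℝ (deriv f) x) :
    ContinuousOn (deriv f) (Set.Icc a b) :=
  fun x hx => ((hdiff x hx).2.continuousAt).continuousWithinAt

lemma mvt_f'
    (hdiff : ∀ x ∈ Set.Icc a b, DifferentiableAt ℝ f x ∧ DifferentiableAt ℝ (deriv f) x)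
    (hbound : ∀ x ∈ Set.Icc a b, Λ ≤ deriv (deriv f) x ∧ deriv (deriv f) x ≤ c * Λ)
    {x y : ℝ} (hx : x ∈ Set.Icc a b) (hy : y ∈ Set.Icc a b) (hxy : x ≤ y) :
    Λ * (y - x) ≤ deriv f y - deriv f x ∧ deriv f y - deriv f x ≤ c * Λ * (y - x) := by
  rcases eq_or_lt_of_le hxy with h | h
  · subst h; constructor <;> simp
  · have hsub : Set.Icc x y ⊆ Set.Icc a b := Set.Icc_subset_Icc hx.1 hy.2
    obtain ⟨ξ, hξ, hslope⟩ := exists_deriv_eq_slope (deriv f) h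
      (fun z hz => ((hdiff z (hsub hz)).2.continuousAt).continuousWithinAt)
      (fun z hz => ((hdiff z (hsub (Set.Ioo_subset_Icc_self hz))).2).differentiableWithinAt)
    have hξab : ξ ∈ Set.Icc a b := hsub (Set.Ioo_subset_Icc_self hξ)
    obtain ⟨hb1, hb2⟩ := hbound ξ hξab
    have hyx : (0:ℝ) < y - x := by linarith
    have heq : deriv f y - deriv f x = deriv (deriv f) ξ * (y - x) := by
      rw [hslope]; field_simp
    rw [heq]
    constructor
    · exact mul_le_mul_of_nonneg_right hb1 (le_of_lt hyx)
    · exact mul_le_mul_of_nonneg_right hb2 (le_of_lt hyx)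

lemma mvt_f
    (hdiff : ∀ x ∈ Set.Icc a b, DifferentiableAt ℝ f x ∧ DifferentiableAt ℝ (deriv f) x)
    {x y : ℝ} (hx : x ∈ Set.Icc a b) (hy : y ∈ Set.Icc a b) (hxy : x < y) :
    ∃ ξ ∈ Set.Ioo x y, f y - f x = deriv f ξ * (y - x) := by
  have hsub : Set.Icc x y ⊆ Set.Icc a b := Set.Icc_subset_Icc hx.1 hy.2
  obtain ⟨ξ, hξ, hslope⟩ := exists_deriv_eq_slope f hxy
    (fun z hz => ((hdiff z (hsub hz)).1.continuousAt).continuousWithinAt)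
    (fun z hz => ((hdiff z (hsub (Set.Ioo_subset_Icc_self hz))).1).differentiableWithinAt)
  refine ⟨ξ, hξ, ?_⟩
  rw [hslope, div_mul_eq_mul_div, mul_div_assoc,
    div_self (by linarith : y - x ≠ 0), mul_one]

lemma ivt_f'
    (hdiff : ∀ x ∈ Set.Icc a b, DifferentiableAt ℝ f x ∧ DifferentiableAt ℝ (deriv f) x)
    {x y t : ℝ} (hx : x ∈ Set.Icc a b) (hy : y ∈ Set.Icc a b) (hxy : x ≤ y)
    (ht : t ∈ Set.Icc (deriv f x) (deriv f y)) :
    ∃ z ∈ Set.Icc x y, deriv f z = t := by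
  have hsub : Set.Icc x y ⊆ Set.Icc a b := Set.Icc_subset_Icc hx.1 hy.2
  have := intermediate_value_Icc hxy ((cont_f' hdiff).mono hsub)
  obtain ⟨z, hz, hzt⟩ := this ht
  exact ⟨z, hz, hzt⟩

lemma nearzone
    (hdiff : ∀ x ∈ Set.Icc a b, DifferentiableAt ℝ f x ∧ DifferentiableAt ℝ (deriv f) x)
    (hbound : ∀ x ∈ Set.Icc a b, Λ ≤ deriv (deriv f) x ∧ deriv (deriv f) x ≤ c * Λ)
    (hΛ : 0 < Λ) {δ : ℝ}
    {x y : ℝ} (hx : x ∈ Set.Icc a b) (hy : y ∈ Set.Icc a b) (hxy : x ≤ y)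
    (h2δ : deriv f y - deriv f x ≤ 2*δ) :
    ‖∑ n ∈ Finset.Ioc ⌊x⌋ ⌊y⌋, ee (f n)‖ ≤ 2*δ/Λ + 1 := by
  have hmvt := (mvt_f' hdiff hbound hx hy hxy).1
  have hyx : y - x ≤ 2*δ/Λ := by
    rw [le_div_iff₀ hΛ]
    nlinarith
  calc ‖∑ n ∈ Finset.Ioc ⌊x⌋ ⌊y⌋, ee (f n)‖
      ≤ ((⌊y⌋ - ⌊x⌋).toNat : ℝ) := trivial_bound _ _ _
    _ ≤ y - x + 1 := by
        have h1 := Int.floor_le y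
        have h2 := Int.lt_floor_add_one x
        rcases le_or_gt ⌊y⌋ ⌊x⌋ with h | h
        · rw [Int.toNat_of_nonpos (by omega)]
          norm_num
          linarith
        · have e : ((⌊y⌋ - ⌊x⌋).toNat : ℝ) = (⌊y⌋:ℝ) - (⌊x⌋:ℝ) := by
            have e0 : ((⌊y⌋ - ⌊x⌋).toNat : ℤ) = ⌊y⌋ - ⌊x⌋ := Int.toNat_of_nonneg (by omega)
            exact_mod_cast congrArg (Int.cast : ℤ → ℝ) e0
          rw [e]
          linarith
    _ ≤ 2*δ/Λ + 1 := by linarith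

lemma KLzone
    (hdiff : ∀ x ∈ Set.Icc a b, DifferentiableAt ℝ f x ∧ DifferentiableAt ℝ (deriv f) x)
    (hbound : ∀ x ∈ Set.Icc a b, Λ ≤ deriv (deriv f) x ∧ deriv (deriv f) x ≤ c * Λ)
    (hΛ : 0 < Λ) {δ : ℝ} (hδpos : 0 < δ) (hδ4 : δ ≤ 1/4)
    {z y : ℝ} (hz : z ∈ Set.Icc a b) (hy : y ∈ Set.Icc a b) (hzy : z ≤ y)
    (m : ℤ) (hfz : (m : ℝ) + δ ≤ deriv f z) (hfy : deriv f y ≤ (m : ℝ) + 1 - δ) :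
    ‖∑ n ∈ Finset.Ioc ⌊z⌋ ⌊y⌋, ee (f n)‖ ≤ 3/δ := by
  set A := ⌊z⌋
  set B := ⌊y⌋
  set u : ℤ → ℝ := fun n => f n - m * n with hu_def
  have hmem : ∀ w : ℝ, z ≤ w → w ≤ y → w ∈ Set.Icc a b :=
    fun w h1 h2 => ⟨le_trans hz.1 h1, le_trans h2 hy.2⟩
  have hstep : ∀ n : ℤ, A + 1 ≤ n → n + 1 ≤ B →
      ∃ ξ, (ξ ∈ Set.Icc a b ∧ z ≤ ξ ∧ ξ ≤ y) ∧ ((n:ℝ) < ξ ∧ ξ < (n:ℝ) + 1) ∧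
        u (n+1) - u n = deriv f ξ - m := by
    intro n h1 h2
    have hnz : z < (n:ℝ) := by
      have := Int.lt_floor_add_one z
      have : (A:ℝ) + 1 ≤ (n:ℝ) := by exact_mod_cast h1
      linarith [Int.lt_floor_add_one z]
    have hny : ((n:ℝ) + 1) ≤ y := by
      have h3 : ((n+1 : ℤ):ℝ) ≤ (B:ℝ) := by exact_mod_cast h2
      push_cast at h3
      linarith [Int.floor_le y]
    have hn_mem : (n:ℝ) ∈ Set.Icc a b := hmem _ (le_of_lt hnz) (by linarith)
    have hn1_mem : ((n:ℝ)+1) ∈ Set.Icc a b := hmem _ (by linarith) hny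
    obtain ⟨ξ, hξIoo, hξeq⟩ := mvt_f hdiff hn_mem hn1_mem (by linarith)
    refine ⟨ξ, ⟨hmem _ (by linarith [hξIoo.1]) (by linarith [hξIoo.2]),
      by linarith [hξIoo.1], by linarith [hξIoo.2]⟩, ⟨hξIoo.1, hξIoo.2⟩, ?_⟩
    have : u (n+1) - u n = f ((n:ℝ)+1) - f (n:ℝ) - m := by
      rw [hu_def]
      push_cast
      ring
    rw [this, hξeq]
    ring
  have hfmono : ∀ p q : ℝ, p ∈ Set.Icc a b → q ∈ Set.Icc a b → p ≤ q →
      deriv f p ≤ deriv f q := by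
    intro p q hp hq hpq
    have := (mvt_f' hdiff hbound hp hq hpq).1
    nlinarith
  have key := KL A B u δ hδpos hδ4
    (by
      intro n h1 h2
      obtain ⟨ξ, ⟨hm, hz1, hy1⟩, _, heq⟩ := hstep n h1 h2
      rw [heq]
      have := hfmono z ξ hz hm hz1
      linarith)
    (by
      intro n h1 h2
      obtain ⟨ξ, ⟨hm, hz1, hy1⟩, _, heq⟩ := hstep n h1 h2
      rw [heq]
      have := hfmono ξ y hm hy hy1
      linarith)
    (by
      intro p q h1 h2 h3
      rcases eq_or_lt_of_le h2 with h | h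
      · subst h
        exact le_refl _
      · obtain ⟨ξp, ⟨hmp, _, _⟩, ⟨_, hp2⟩, heqp⟩ := hstep p h1 (by omega)
        obtain ⟨ξq, ⟨hmq, _, _⟩, ⟨hq1, _⟩, heqq⟩ := hstep q (by omega) h3
        rw [heqp, heqq]
        have hpq : ξp ≤ ξq := by
          have : ((p:ℝ)+1) ≤ (q:ℝ) := by exact_mod_cast (by omega : p + 1 ≤ q)
          linarith
        have := hfmono ξp ξq hmp hmq hpq
        linarith)
  calc ‖∑ n ∈ Finset.Ioc A B, ee (f n)‖ = ‖∑ n ∈ Finset.Ioc A B, ee (u n)‖ := by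
        congr 1
        refine Finset.sum_congr rfl (fun n _ => ?_)
        rw [show u n = f n - ((m * n : ℤ) : ℝ) by rw [hu_def]; push_cast; ring, ee_sub_int]
    _ ≤ 3/δ := key

lemma onelevel
    (hdiff : ∀ x ∈ Set.Icc a b, DifferentiableAt ℝ f x ∧ DifferentiableAt ℝ (deriv f) x)
    (hbound : ∀ x ∈ Set.Icc a b, Λ ≤ deriv (deriv f) x ∧ deriv (deriv f) x ≤ c * Λ)
    (hΛ : 0 < Λ) {δ : ℝ} (hδpos : 0 < δ) (hδ4 : δ ≤ 1/4)
    {x y : ℝ} (hx : x ∈ Set.Icc a b) (hy : y ∈ Set.Icc a b) (hxy : x ≤ y)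
    (m : ℤ) (hfx : (m : ℝ) - δ ≤ deriv f x) (hfy : deriv f y ≤ (m : ℝ) + 1 - δ) :
    ‖∑ n ∈ Finset.Ioc ⌊x⌋ ⌊y⌋, ee (f n)‖ ≤ (2*δ/Λ + 1) + 3/δ := by
  have hE2 : (0:ℝ) ≤ 3/δ := by positivity
  have hE1 : (0:ℝ) ≤ 2*δ/Λ + 1 := by positivity
  have hfmono := fun {p q : ℝ} (hp : p ∈ Set.Icc a b) (hq : q ∈ Set.Icc a b) (hpq : p ≤ q) =>
    (by nlinarith [(mvt_f' hdiff hbound hp hq hpq).1] : deriv f p ≤ deriv f q)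
  rcases le_or_gt (deriv f y) ((m:ℝ) + δ) with hcase | hcase
  · have := nearzone (δ := δ) hdiff hbound hΛ hx hy hxy (by linarith)
    linarith
  rcases le_or_gt ((m:ℝ) + δ) (deriv f x) with hcase2 | hcase2
  · have := KLzone hdiff hbound hΛ hδpos hδ4 hx hy hxy m hcase2 hfy
    linarith
  · obtain ⟨z, hzIcc, hz⟩ := ivt_f' hdiff hx hy hxy ⟨le_of_lt hcase2, le_of_lt hcase⟩
    have hzab : z ∈ Set.Icc a b := ⟨le_trans hx.1 hzIcc.1, le_trans hzIcc.2 hy.2⟩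
    have hsplit := sum_Ioc_split (Int.floor_le_floor hzIcc.1) (Int.floor_le_floor hzIcc.2)
      (fun n => ee (f n))
    rw [hsplit]
    have b1 := nearzone (δ := δ) hdiff hbound hΛ hx hzab hzIcc.1 (by rw [hz]; linarith)
    have b2 := KLzone hdiff hbound hΛ hδpos hδ4 hzab hy hzIcc.2 m (by rw [hz]) hfy
    calc ‖(∑ n ∈ Finset.Ioc ⌊x⌋ ⌊z⌋, ee (f n)) + ∑ n ∈ Finset.Ioc ⌊z⌋ ⌊y⌋, ee (f n)‖
        ≤ ‖∑ n ∈ Finset.Ioc ⌊x⌋ ⌊z⌋, ee (f n)‖ + ‖∑ n ∈ Finset.Ioc ⌊z⌋ ⌊y⌋, ee (f n)‖ :=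
          norm_add_le _ _
      _ ≤ (2*δ/Λ + 1) + 3/δ := by linarith

lemma levels
    (hdiff : ∀ x ∈ Set.Icc a b, DifferentiableAt ℝ f x ∧ DifferentiableAt ℝ (deriv f) x)
    (hbound : ∀ x ∈ Set.Icc a b, Λ ≤ deriv (deriv f) x ∧ deriv (deriv f) x ≤ c * Λ)
    (hΛ : 0 < Λ) {δ : ℝ} (hδpos : 0 < δ) (hδ4 : δ ≤ 1/4) :
    ∀ D : ℕ, ∀ x y : ℝ, x ∈ Set.Icc a b → y ∈ Set.Icc a b → x ≤ y →
    ⌊deriv f y + δ⌋ - ⌊deriv f x + δ⌋ ≤ (D : ℤ) →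
    ‖∑ n ∈ Finset.Ioc ⌊x⌋ ⌊y⌋, ee (f n)‖ ≤ ((D:ℝ)+1) * ((2*δ/Λ + 1) + 3/δ) := by
  have hE : (0:ℝ) ≤ (2*δ/Λ + 1) + 3/δ := by positivity
  intro D
  induction D with
  | zero =>
    intro x y hx hy hxy hD
    have h1 : ((⌊deriv f x + δ⌋ : ℝ)) - δ ≤ deriv f x := by
      have := Int.floor_le (deriv f x + δ)
      linarith
    have h2 : deriv f y ≤ ((⌊deriv f x + δ⌋ : ℝ)) + 1 - δ := by
      have := Int.lt_floor_add_one (deriv f y + δ)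
      have hcast : ((⌊deriv f y + δ⌋ : ℝ)) ≤ ((⌊deriv f x + δ⌋ : ℝ)) := by
        exact_mod_cast (by omega : ⌊deriv f y + δ⌋ ≤ ⌊deriv f x + δ⌋)
      linarith
    have := onelevel hdiff hbound hΛ hδpos hδ4 hx hy hxy ⌊deriv f x + δ⌋ h1 h2
    push_cast
    linarith
  | succ D ih =>
    intro x y hx hy hxy hD
    set m := ⌊deriv f x + δ⌋ with hm_def
    have h1 : ((m : ℝ)) - δ ≤ deriv f x := by
      have := Int.floor_le (deriv f x + δ)
      rw [hm_def]
      linarith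
    rcases le_or_gt (deriv f y) ((m:ℝ) + 1 - δ) with hcase | hcase
    · have := onelevel hdiff hbound hΛ hδpos hδ4 hx hy hxy m h1 hcase
      have hD1 : (0:ℝ) ≤ (D:ℝ) + 1 := by positivity
      push_cast
      nlinarith
    · have hfx' : deriv f x ≤ (m:ℝ) + 1 - δ := by
        have := Int.lt_floor_add_one (deriv f x + δ)
        rw [hm_def]
        linarith
      obtain ⟨z, hzIcc, hz⟩ := ivt_f' hdiff hx hy hxy ⟨hfx', le_of_lt hcase⟩
      have hzab : z ∈ Set.Icc a b := ⟨le_trans hx.1 hzIcc.1, le_trans hzIcc.2 hy.2⟩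
      have hsplit := sum_Ioc_split (Int.floor_le_floor hzIcc.1) (Int.floor_le_floor hzIcc.2)
        (fun n => ee (f n))
      rw [hsplit]
      have b1 := onelevel hdiff hbound hΛ hδpos hδ4 hx hzab hzIcc.1 m h1 (le_of_eq hz)
      have hfloorz : ⌊deriv f z + δ⌋ = m + 1 := by
        rw [hz, show (m:ℝ) + 1 - δ + δ = ((m + 1 : ℤ) : ℝ) by push_cast; ring,
          Int.floor_intCast]
      have b2 := ih z y hzab hy hzIcc.2 (by rw [hfloorz]; omega)
      calc ‖(∑ n ∈ Finset.Ioc ⌊x⌋ ⌊z⌋, ee (f n)) + ∑ n ∈ Finset.Ioc ⌊z⌋ ⌊y⌋, ee (f n)‖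
          ≤ ‖∑ n ∈ Finset.Ioc ⌊x⌋ ⌊z⌋, ee (f n)‖ + ‖∑ n ∈ Finset.Ioc ⌊z⌋ ⌊y⌋, ee (f n)‖ :=
            norm_add_le _ _
        _ ≤ (((D:ℝ)+1)+1) * ((2*δ/Λ + 1) + 3/δ) := by nlinarith
        _ = (((D+1:ℕ):ℝ)+1) * ((2*δ/Λ + 1) + 3/δ) := by push_cast; ring

end Main

theorem van_der_corput_second_derivative :
    ∃ C : ℝ, 0 < C ∧ ∀ (a b c Λ : ℝ) (f : ℝ → ℝ),
      a + 1 ≤ b → 1 < c → 0 < Λ →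
      (∀ x ∈ Set.Icc a b, DifferentiableAt ℝ f x ∧ DifferentiableAt ℝ (deriv f) x) →
      (∀ x ∈ Set.Icc a b, Λ ≤ deriv (deriv f) x ∧ deriv (deriv f) x ≤ c * Λ) →
      ‖∑ n ∈ Finset.Ioc ⌊a⌋ ⌊b⌋, Complex.exp (2 * Real.pi * I * (f n))‖
        ≤ C * (c * (b - a) * Λ ^ ((1 : ℝ) / 2) + Λ ^ (-(1 : ℝ) / 2)) := by
  refine ⟨100, by norm_num, ?_⟩
  intro a b c Λ f hab hc hΛ hdiff hbound
  rw [show (∑ n ∈ Finset.Ioc ⌊a⌋ ⌊b⌋, Complex.exp (2 * Real.pi * I * (f n)))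
    = ∑ n ∈ Finset.Ioc ⌊a⌋ ⌊b⌋, ee (f n) from rfl]
  have hsqrt : Λ ^ ((1:ℝ)/2) = Real.sqrt Λ := (Real.sqrt_eq_rpow Λ).symm
  have hneg : Λ ^ (-(1:ℝ)/2) = (Real.sqrt Λ)⁻¹ := by
    rw [show -(1:ℝ)/2 = -((1:ℝ)/2) by ring, Real.rpow_neg (le_of_lt hΛ),
      ← Real.sqrt_eq_rpow]
  rw [hsqrt, hneg]
  set δ := Real.sqrt Λ with hδ_def
  have hδpos : 0 < δ := Real.sqrt_pos.mpr hΛ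
  have hδδ : δ * δ = Λ := Real.mul_self_sqrt (le_of_lt hΛ)
  have hab' : a ≤ b := by linarith
  have haI : a ∈ Set.Icc a b := ⟨le_refl a, hab'⟩
  have hbI : b ∈ Set.Icc a b := ⟨hab', le_refl b⟩
  have hba1 : (1:ℝ) ≤ b - a := by linarith
  have hinv : δ * δ⁻¹ = 1 := mul_inv_cancel₀ (ne_of_gt hδpos)
  have hinvpos : 0 < δ⁻¹ := inv_pos.mpr hδpos
  have floor_bd : ((⌊b⌋ - ⌊a⌋).toNat : ℝ) ≤ b - a + 1 := by
    have h1 := Int.floor_le b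
    have h2 := Int.lt_floor_add_one a
    rcases le_or_gt ⌊b⌋ ⌊a⌋ with h | h
    · rw [Int.toNat_of_nonpos (by omega)]
      norm_num
      linarith
    · have e : ((⌊b⌋ - ⌊a⌋).toNat : ℝ) = (⌊b⌋:ℝ) - (⌊a⌋:ℝ) := by
        have e0 : ((⌊b⌋ - ⌊a⌋).toNat : ℤ) = ⌊b⌋ - ⌊a⌋ := Int.toNat_of_nonneg (by omega)
        exact_mod_cast congrArg (Int.cast : ℤ → ℝ) e0
      rw [e]
      linarith
  rcases le_or_gt δ (1/4) with hδ4 | hδ4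
  · -- small Λ : use the van der Corput machinery
    set D := (⌊deriv f b + δ⌋ - ⌊deriv f a + δ⌋).toNat with hD_def
    have hlev := levels hdiff hbound hΛ hδpos hδ4 D a b haI hbI hab' (Int.self_le_toNat _)
    have hmvt := (mvt_f' hdiff hbound haI hbI hab').2
    have hcΛ : 0 < c * Λ * (b - a) := by
      apply mul_pos (mul_pos (by linarith) hΛ)
      linarith
    have hDle : (D:ℝ) ≤ c * Λ * (b - a) + 1 := by
      rcases le_or_gt (⌊deriv f b + δ⌋ - ⌊deriv f a + δ⌋) 0 with h | h
      · rw [hD_def, Int.toNat_of_nonpos h]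
        norm_num
        nlinarith
      · have e : ((D:ℕ) : ℝ) = (⌊deriv f b + δ⌋ : ℝ) - (⌊deriv f a + δ⌋ : ℝ) := by
          have e0 : ((D:ℕ) : ℤ) = ⌊deriv f b + δ⌋ - ⌊deriv f a + δ⌋ :=
            Int.toNat_of_nonneg (by omega)
          exact_mod_cast congrArg (Int.cast : ℤ → ℝ) e0
        rw [e]
        have f1 := Int.floor_le (deriv f b + δ)
        have f2 := Int.lt_floor_add_one (deriv f a + δ)
        linarith
    have h1δ : 4 ≤ 1/δ := by
      rw [le_div_iff₀ hδpos]
      linarith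
    have hE : (2*δ/Λ + 1) + 3/δ ≤ 6/δ := by
      have e1 : 2*δ/Λ = 2*(1/δ) := by
        rw [← hδδ]
        field_simp
      have e2 : 3/δ = 3*(1/δ) := by ring
      have e3 : 6/δ = 6*(1/δ) := by ring
      rw [e1, e2, e3]
      linarith
    have hEpos : (0:ℝ) ≤ (2*δ/Λ + 1) + 3/δ := by positivity
    calc ‖∑ n ∈ Finset.Ioc ⌊a⌋ ⌊b⌋, ee (f n)‖
        ≤ ((D:ℝ)+1) * ((2*δ/Λ + 1) + 3/δ) := hlev
      _ ≤ (c * Λ * (b - a) + 2) * (6/δ) :=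
          mul_le_mul (by linarith) hE hEpos (by nlinarith)
      _ ≤ 100 * (c * (b - a) * δ + δ⁻¹) := by
          rw [← hδδ]
          have e : (c * (δ*δ) * (b - a) + 2) * (6/δ) = 6 * c * (b-a) * δ * (δ * δ⁻¹)
              + 12 * δ⁻¹ := by
            field_simp
            ring
          rw [e, hinv, mul_one]
          nlinarith [mul_pos (mul_pos (by linarith : (0:ℝ) < c) (by linarith : (0:ℝ) < b - a)) hδpos]
  · -- large Λ : trivial bound suffices
    calc ‖∑ n ∈ Finset.Ioc ⌊a⌋ ⌊b⌋, ee (f n)‖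
        ≤ ((⌊b⌋ - ⌊a⌋).toNat : ℝ) := trivial_bound _ _ _
      _ ≤ b - a + 1 := floor_bd
      _ ≤ 100 * (c * (b - a) * δ + δ⁻¹) := by
          nlinarith [mul_pos (by linarith : (0:ℝ) < c) (by linarith : (0:ℝ) < b - a)]
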